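/- For every bounded real sequence u and every positive integer k, the limit inferior of the averages (1/(kT))·∑_{t=1}^{kT} u_t as T→∞ is at most the limit inferior as δ→1⁻ of the Abel sums (1−δ)·∑_{t=1}^{∞} δ^{t−1} u_t. -/

import Mathlib

open Filter

/-- `u` is a bounded sequence. -/
def Bdd (u : ℕ → ℝ) : Prop := ∃ C : ℝ, ∀ t, |u t| ≤ C

/-- Cesàro average of the first `T` terms. -/
noncomputable def avg (u : ℕ → ℝ) (T : ℕ) : ℝ := (∑ t ∈ Finset.range T, u t) / T

/-- Abel (discounted utilitarian) sum. -/
noncomputable def abel (u : ℕ → ℝ) (δ : ℝ) : ℝ := (1 - δ) * ∑' t : ℕ, δ ^ t * u t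


lemma abs_partial_le (v : ℕ → ℝ) (C : ℝ) (hv : ∀ t, |v t| ≤ C) (n : ℕ) :
    |∑ t ∈ Finset.range n, v t| ≤ n * C := by
  calc |∑ t ∈ Finset.range n, v t| ≤ ∑ t ∈ Finset.range n, |v t| :=
        Finset.abs_sum_le_sum_abs _ _
    _ ≤ ∑ _t ∈ Finset.range n, C := Finset.sum_le_sum fun t _ => hv t
    _ = n * C := by simp [mul_comm]

lemma summable_geom_mul (v : ℕ → ℝ) (C : ℝ) (hv : ∀ t, |v t| ≤ C) {δ : ℝ}
    (h0 : 0 ≤ δ) (h1 : δ < 1) : Summable (fun t => δ ^ t * v t) := by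
  refine Summable.of_norm_bounded
    ((summable_geometric_of_lt_one h0 h1).mul_left C) (fun t => ?_)
  have h : |δ ^ t * v t| = δ ^ t * |v t| := by
    rw [abs_mul, abs_of_nonneg (pow_nonneg h0 t)]
  rw [Real.norm_eq_abs, h, mul_comm]
  exact mul_le_mul_of_nonneg_right (hv t) (pow_nonneg h0 t)

lemma summable_geom_mul_partial (v : ℕ → ℝ) (C : ℝ) (hv : ∀ t, |v t| ≤ C) {δ : ℝ}
    (h0 : 0 ≤ δ) (h1 : δ < 1) :
    Summable (fun n => δ ^ n * ∑ t ∈ Finset.range (n + 1), v t) := by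
  have hs : Summable (fun n : ℕ => C * ((n : ℝ) * δ ^ n) + C * δ ^ n) := by
    have h1' : ‖δ‖ < 1 := by rw [Real.norm_eq_abs, abs_of_nonneg h0]; exact h1
    have := summable_pow_mul_geometric_of_norm_lt_one 1 h1' (R := ℝ)
    simp only [pow_one] at this
    exact (this.mul_left C).add ((summable_geometric_of_lt_one h0 h1).mul_left C)
  refine Summable.of_norm_bounded hs (fun n => ?_)
  have h := abs_partial_le v C hv (n + 1)
  have hC : 0 ≤ C := le_trans (abs_nonneg _) (hv 0)
  have habs : |δ ^ n * ∑ t ∈ Finset.range (n + 1), v t|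
      = δ ^ n * |∑ t ∈ Finset.range (n + 1), v t| := by
    rw [abs_mul, abs_of_nonneg (pow_nonneg h0 n)]
  rw [Real.norm_eq_abs, habs]
  have hp : (0:ℝ) ≤ δ ^ n := pow_nonneg h0 n
  push_cast at h ⊢
  nlinarith [abs_nonneg (∑ t ∈ Finset.range (n + 1), v t)]

lemma abel_id (v : ℕ → ℝ) (C : ℝ) (hv : ∀ t, |v t| ≤ C) {δ : ℝ}
    (h0 : 0 ≤ δ) (h1 : δ < 1) :
    ∑' t : ℕ, δ ^ t * v t
      = (1 - δ) * ∑' n : ℕ, δ ^ n * ∑ t ∈ Finset.range (n + 1), v t := by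
  set P : ℕ → ℝ := fun n => ∑ t ∈ Finset.range n, v t with hP
  set a : ℕ → ℝ := fun n => δ ^ n * P n with ha
  have key : ∀ n, a (n + 1) - a n = δ ^ n * v n - (1 - δ) * (δ ^ n * P (n + 1)) := by
    intro n
    simp only [ha, hP, Finset.sum_range_succ, pow_succ]
    ring
  have s1 : Summable (fun t => δ ^ t * v t) := summable_geom_mul v C hv h0 h1
  have s2 : Summable (fun n => δ ^ n * P (n + 1)) := summable_geom_mul_partial v C hv h0 h1
  set f : ℕ → ℝ := fun n => δ ^ n * v n - (1 - δ) * (δ ^ n * P (n + 1)) with hf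
  have s3 : Summable f := s1.sub (s2.mul_left (1 - δ))
  have ht : Tendsto (fun N => ∑ n ∈ Finset.range N, f n) atTop (nhds (∑' n, f n)) :=
    s3.hasSum.tendsto_sum_nat
  have hsum_eq : ∀ N, ∑ n ∈ Finset.range N, f n = a N := by
    intro N
    have : ∑ n ∈ Finset.range N, (a (n + 1) - a n) = a N - a 0 := Finset.sum_range_sub a N
    have ha0 : a 0 = 0 := by simp [ha, hP]
    calc ∑ n ∈ Finset.range N, f n = ∑ n ∈ Finset.range N, (a (n + 1) - a n) :=
          Finset.sum_congr rfl (fun n _ => (key n).symm)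
      _ = a N := by rw [this, ha0, sub_zero]
  have hC : 0 ≤ C := le_trans (abs_nonneg _) (hv 0)
  have ha_zero : Tendsto a atTop (nhds 0) := by
    have h1' : ‖δ‖ < 1 := by rw [Real.norm_eq_abs, abs_of_nonneg h0]; exact h1
    have hs : Summable (fun n : ℕ => C * ((n : ℝ) * δ ^ n)) := by
      have := summable_pow_mul_geometric_of_norm_lt_one 1 h1' (R := ℝ)
      simp only [pow_one] at this
      exact this.mul_left C
    have hg : Tendsto (fun n : ℕ => C * ((n : ℝ) * δ ^ n)) atTop (nhds 0) :=
      hs.tendsto_atTop_zero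
    refine squeeze_zero_norm (fun n => ?_) hg
    have h := abs_partial_le v C hv n
    have habs : |δ ^ n * P n| = δ ^ n * |P n| := by
      rw [abs_mul, abs_of_nonneg (pow_nonneg h0 n)]
    rw [Real.norm_eq_abs, ha]
    simp only []
    rw [habs]
    have hp : (0:ℝ) ≤ δ ^ n := pow_nonneg h0 n
    have hple : δ ^ n ≤ 1 := pow_le_one₀ h0 h1.le
    nlinarith [abs_nonneg (P n)]
  have htsum0 : (∑' n, f n) = 0 := by
    have : Tendsto (fun N => ∑ n ∈ Finset.range N, f n) atTop (nhds 0) := by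
      simpa only [hsum_eq] using ha_zero
    exact tendsto_nhds_unique ht this
  have hsplit : (∑' n, f n) = (∑' t : ℕ, δ ^ t * v t)
      - (1 - δ) * ∑' n, δ ^ n * P (n + 1) := by
    rw [hf]
    rw [Summable.tsum_sub s1 (s2.mul_left (1 - δ)), tsum_mul_left]
  rw [hsplit] at htsum0
  linarith

lemma avg_abs_le (u : ℕ → ℝ) (C : ℝ) (hC : ∀ t, |u t| ≤ C) (n : ℕ) : |avg u n| ≤ C := by
  have hC0 : 0 ≤ C := le_trans (abs_nonneg _) (hC 0)
  rcases Nat.eq_zero_or_pos n with h | h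
  · simp [avg, h, hC0]
  · have hn : (0:ℝ) < n := by exact_mod_cast h
    rw [avg, abs_div, abs_of_pos hn, div_le_iff₀ hn, mul_comm]
    exact abs_partial_le u C hC n

lemma abel_le (u : ℕ → ℝ) (C : ℝ) (hC : ∀ t, |u t| ≤ C) {δ : ℝ}
    (h0 : 0 ≤ δ) (h1 : δ < 1) : |abel u δ| ≤ C := by
  have hC0 : 0 ≤ C := le_trans (abs_nonneg _) (hC 0)
  have s1 : Summable (fun t => δ ^ t * u t) := summable_geom_mul u C hC h0 h1
  have snorm : Summable (fun t => ‖δ ^ t * u t‖) := by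
    refine Summable.of_nonneg_of_le (fun t => norm_nonneg _) (fun t => ?_)
      ((summable_geometric_of_lt_one h0 h1).mul_left C)
    rw [Real.norm_eq_abs, abs_mul, abs_of_nonneg (pow_nonneg h0 t), mul_comm]
    exact mul_le_mul_of_nonneg_right (hC t) (pow_nonneg h0 t)
  have h2 : |∑' t : ℕ, δ ^ t * u t| ≤ C * (1 - δ)⁻¹ := by
    calc |∑' t : ℕ, δ ^ t * u t| ≤ ∑' t : ℕ, ‖δ ^ t * u t‖ := norm_tsum_le_tsum_norm snorm
      _ ≤ ∑' t : ℕ, C * δ ^ t := by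
          refine Summable.tsum_le_tsum (fun t => ?_) snorm
            ((summable_geometric_of_lt_one h0 h1).mul_left C)
          rw [Real.norm_eq_abs, abs_mul, abs_of_nonneg (pow_nonneg h0 t), mul_comm]
          exact mul_le_mul_of_nonneg_right (hC t) (pow_nonneg h0 t)
      _ = C * (1 - δ)⁻¹ := by rw [tsum_mul_left, tsum_geometric_of_lt_one h0 h1]
  have hδ : (0:ℝ) < 1 - δ := by linarith
  rw [abel, abs_mul, abs_of_pos hδ]
  calc (1 - δ) * |∑' t : ℕ, δ ^ t * u t| ≤ (1 - δ) * (C * (1 - δ)⁻¹) :=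
        mul_le_mul_of_nonneg_left h2 hδ.le
    _ = C := by field_simp

theorem stmt_0 (u : ℕ → ℝ) (hu : Bdd u) (k : ℕ) (hk : 0 < k) :
    liminf (fun T : ℕ => avg u (k * T)) atTop ≤
      liminf (fun δ : ℝ => abel u δ) (nhdsWithin 1 (Set.Iio 1)) := by
  obtain ⟨C, hC⟩ := hu
  have hC0 : 0 ≤ C := le_trans (abs_nonneg _) (hC 0)
  set L := liminf (fun T : ℕ => avg u (k * T)) atTop with hLdef
  refine le_of_forall_pos_le_add (fun ε hε => ?_)
  -- eventual lower bound for the averages along multiples of k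
  have hbdd : IsBoundedUnder (· ≥ ·) atTop (fun T : ℕ => avg u (k * T)) :=
    isBoundedUnder_of ⟨-C, fun T => (abs_le.1 (avg_abs_le u C hC (k * T))).1⟩
  have hev : ∀ᶠ T in atTop, L - ε / 2 < avg u (k * T) :=
    eventually_lt_of_lt_liminf (by linarith) hbdd
  obtain ⟨N₀, hN₀⟩ := eventually_atTop.1 hev
  set a := L - ε / 2 with hadef
  set v : ℕ → ℝ := fun t => u t - a with hvdef
  set Cv : ℝ := C + |a| with hCvdef
  have hv : ∀ t, |v t| ≤ Cv := by
    intro t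
    calc |v t| = |u t + (-a)| := by rw [hvdef]; ring_nf
      _ ≤ |u t| + |(-a)| := abs_add_le _ _
      _ ≤ C + |a| := by rw [abs_neg]; exact add_le_add_left (hC t) _
  have hCv0 : 0 ≤ Cv := le_trans (abs_nonneg _) (hv 0)
  set P : ℕ → ℝ := fun n => ∑ t ∈ Finset.range n, v t with hPdef
  set B : ℝ := (k * N₀ + k : ℕ) * Cv with hBdef
  have hB0 : 0 ≤ B := mul_nonneg (Nat.cast_nonneg _) hCv0
  -- uniform lower bound on partial sums
  have hP : ∀ n, -B ≤ P n := by
    intro n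
    by_cases hn : n ≤ k * N₀ + k
    · have h1 := abs_partial_le v Cv hv n
      have h2 : (n : ℝ) * Cv ≤ B := by
        rw [hBdef]
        exact mul_le_mul_of_nonneg_right (by exact_mod_cast hn) hCv0
      have := (abs_le.1 h1).1
      linarith
    · push_neg at hn
      set m := k * (n / k) with hmdef
      have hmod : k * (n / k) + n % k = n := Nat.div_add_mod n k
      have hmodlt : n % k < k := Nat.mod_lt n hk
      have hqN : N₀ ≤ n / k := by
        by_contra h
        push_neg at h
        have h2 : n / k + 1 ≤ N₀ := h
        have h3 : k * (n / k + 1) ≤ k * N₀ := Nat.mul_le_mul_left k h2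
        have h4 : k * (n / k + 1) = k * (n / k) + k := by ring
        omega
      have hmn : m ≤ n := by omega
      have hm1 : 1 ≤ m := by
        have : k ≤ k * (n / k + 1) := Nat.le_mul_of_pos_right k (Nat.succ_pos _)
        have h5 : 1 ≤ n / k := by
          rw [Nat.one_le_div_iff hk]; omega
        calc 1 ≤ k := hk
          _ = k * 1 := (mul_one k).symm
          _ ≤ k * (n / k) := Nat.mul_le_mul_left k h5
      have havg : a < avg u m := hN₀ (n / k) hqN
      have hPm : 0 < P m := by
        have hm0 : (0:ℝ) < m := by exact_mod_cast hm1
        have hPm_eq : P m = (∑ t ∈ Finset.range m, u t) - m * a := by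
          simp [hPdef, hvdef, Finset.sum_sub_distrib, mul_comm]
        rw [avg, lt_div_iff₀ hm0] at havg
        rw [hPm_eq]
        linarith [havg]
      have hsplit : P n = P m + ∑ t ∈ Finset.Ico m n, v t := by
        rw [hPdef]
        exact (Finset.sum_range_add_sum_Ico v hmn).symm
      have hico : |∑ t ∈ Finset.Ico m n, v t| ≤ (n - m : ℕ) * Cv := by
        calc |∑ t ∈ Finset.Ico m n, v t| ≤ ∑ t ∈ Finset.Ico m n, |v t| :=
              Finset.abs_sum_le_sum_abs _ _
          _ ≤ ∑ _t ∈ Finset.Ico m n, Cv := Finset.sum_le_sum fun t _ => hv t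
          _ = (n - m : ℕ) * Cv := by rw [Finset.sum_const, Nat.card_Ico]; simp [mul_comm]
      have hnm : (n - m : ℕ) ≤ k := by omega
      have hico2 : ((n - m : ℕ) : ℝ) * Cv ≤ B := by
        rw [hBdef]
        refine mul_le_mul_of_nonneg_right ?_ hCv0
        exact_mod_cast le_trans hnm (by omega)
      have := (abs_le.1 hico).1
      rw [hsplit]
      linarith
  -- eventual bound on abel sums
  have hevδ : ∀ᶠ δ in nhdsWithin (1:ℝ) (Set.Iio 1), L - ε ≤ abel u δ ∧ abel u δ ≤ C := by
    set c : ℝ := min (1/2) (ε / (2 * (B + 1))) with hcdef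
    have hc0 : 0 < c := by
      refine lt_min (by norm_num) ?_
      positivity
    have hmem : Set.Ioo (1 - c) 1 ∈ nhdsWithin (1:ℝ) (Set.Iio 1) :=
      Ioo_mem_nhdsLT_of_mem ⟨by linarith, le_refl _⟩
    filter_upwards [hmem] with δ hδ
    have hδ1 : δ < 1 := hδ.2
    have hδ0 : 0 ≤ δ := by
      have : c ≤ 1/2 := min_le_left _ _
      linarith [hδ.1]
    have hδpos : (0:ℝ) < 1 - δ := by linarith
    constructor
    · -- main estimate
      have s_u : Summable (fun t => δ ^ t * u t) := summable_geom_mul u C hC hδ0 hδ1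
      have s_v : Summable (fun t => δ ^ t * v t) := summable_geom_mul v Cv hv hδ0 hδ1
      have s_a : Summable (fun t : ℕ => δ ^ t * a) :=
        (summable_geometric_of_lt_one hδ0 hδ1).mul_right a
      have s2 : Summable (fun n => δ ^ n * P (n + 1)) :=
        summable_geom_mul_partial v Cv hv hδ0 hδ1
      have hvsum : (∑' t : ℕ, δ ^ t * v t)
          = (∑' t : ℕ, δ ^ t * u t) - a * (1 - δ)⁻¹ := by
        have : (fun t : ℕ => δ ^ t * v t) = fun t : ℕ => δ ^ t * u t - δ ^ t * a := by
          funext t; rw [hvdef]; ring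
        rw [this, Summable.tsum_sub s_u s_a, tsum_mul_right, tsum_geometric_of_lt_one hδ0 hδ1,
          mul_comm]
      have hid := abel_id v Cv hv hδ0 hδ1
      have hS2 : -B / (1 - δ) ≤ ∑' n, δ ^ n * P (n + 1) := by
        have hgeo : Summable (fun n : ℕ => δ ^ n * (-B)) :=
          (summable_geometric_of_lt_one hδ0 hδ1).mul_right (-B)
        have hle : ∀ n : ℕ, δ ^ n * (-B) ≤ δ ^ n * P (n + 1) := fun n =>
          mul_le_mul_of_nonneg_left (hP (n + 1)) (pow_nonneg hδ0 n)
        calc -B / (1 - δ) = ∑' n : ℕ, δ ^ n * (-B) := by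
              rw [tsum_mul_right, tsum_geometric_of_lt_one hδ0 hδ1, div_eq_inv_mul,
                mul_comm]
          _ ≤ ∑' n, δ ^ n * P (n + 1) := Summable.tsum_le_tsum hle hgeo s2
      have habel : abel u δ - a = (1 - δ) * ((1 - δ) * ∑' n, δ ^ n * P (n + 1)) := by
        rw [← hid, hvsum, abel]
        field_simp
      have hbound : -((1 - δ) * B) ≤ abel u δ - a := by
        rw [habel]
        have h6 : -B ≤ (1 - δ) * (∑' n, δ ^ n * P (n + 1)) := by
          rw [div_le_iff₀ hδpos] at hS2
          nlinarith [hS2]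
        nlinarith [h6, hδpos]
      have hsmall : (1 - δ) * B ≤ ε / 2 := by
        have h7 : 1 - δ < c := by linarith [hδ.1]
        have h8 : c ≤ ε / (2 * (B + 1)) := min_le_right _ _
        have h9 : (1 - δ) * B ≤ c * B := mul_le_mul_of_nonneg_right h7.le hB0
        have h10 : c * B ≤ ε / (2 * (B + 1)) * B := mul_le_mul_of_nonneg_right h8 hB0
        have h11 : ε / (2 * (B + 1)) * B ≤ ε / 2 := by
          rw [div_mul_eq_mul_div, div_le_div_iff₀ (by positivity) (by norm_num)]
          nlinarith
        linarith
      have h12 : a - ε / 2 ≤ abel u δ := by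
        have hb2 : -(ε/2) ≤ abel u δ - a := le_trans (by linarith [hsmall] : -(ε/2) ≤ -((1-δ)*B)) hbound
        linarith [hb2]
      rw [hadef] at h12
      linarith
    · exact (abs_le.1 (abel_le u C hC hδ0 hδ1)).2
  have hcob : IsCoboundedUnder (· ≥ ·) (nhdsWithin (1:ℝ) (Set.Iio 1))
      (fun δ : ℝ => abel u δ) :=
    isCoboundedUnder_ge_of_eventually_le _ (hevδ.mono fun δ h => h.2)
  have h1 : L - ε ≤ liminf (fun δ : ℝ => abel u δ) (nhdsWithin (1:ℝ) (Set.Iio 1)) :=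
    le_liminf_of_le hcob (hevδ.mono fun δ h => h.1)
  linarith
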